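/- arXiv:1701.02126 — 2 statements merged into one kernel-verified Lean document; each statement's English description precedes it below -/
import Mathlib

section
/- Suppose the conic hull of the reaction vectors {c^r}_{r∈R} equals ℝ^d. Let D ⊂ ℝ₊^d be compact and set λ̄ := max over r ∈ R and z ∈ D of λ_r(z), c̄⋆ := max_r ‖c_in^r‖₁, q̄ := max(e, max_{‖ξ‖₁ ≤ 1} min{‖q‖_∞ : q ∈ ℝ₊^m, Σ_r q_r c^r = ξ}), and γ := λ̄ − q̄ + q̄·log(q̄ / min_r min(k_r, 1)). Then for every z ∈ D with strictly positive coordinates and every ξ ∈ ℝ^d with ‖ξ‖₁ ≤ 1: L(λ(z), ξ) ≤ m·[γ + q̄·c̄⋆·(log min_{i} z_i)_−], where (a)_− := max(−a, 0). -/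
open Real Filter Finset Set MeasureTheory
open scoped Classical

noncomputable section

/-- A chemical reaction network on `d` species with `m` reactions. -/
structure CRN (d m : ℕ) where
  cin : Fin m → Fin d → ℕ
  cout : Fin m → Fin d → ℕ
  k : Fin m → ℝ
  k_pos : ∀ r, 0 < k r

namespace CRN

variable {d m : ℕ}

/-- The reaction vector `c^r = c_out^r - c_in^r`. -/
def cvec (N : CRN d m) (r : Fin m) : Fin d → ℝ := fun i => (N.cout r i : ℝ) - (N.cin r i : ℝ)

/-- Mass-action rate `λ_r`. -/
def lam (N : CRN d m) (r : Fin m) (x : Fin d → ℝ) : ℝ := N.k r * ∏ i, x i ^ (N.cin r i)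

/-- Volume-normalized jump rate `Λ_r^{(v)}`. -/
def jump (N : CRN d m) (v : ℝ) (r : Fin m) (x : Fin d → ℝ) : ℝ :=
  N.k r / v ^ (∑ i, N.cin r i) * ∏ i, ∏ l ∈ Finset.range (N.cin r i), (v * x i - (l : ℝ))

/-- Reactions whose input complex is `w`-maximal among all input complexes. -/
def Rw (N : CRN d m) (w : Fin d → ℝ) : Set (Fin m) :=
  {r | ∀ r', 0 ≤ ∑ i, w i * ((N.cin r i : ℝ) - (N.cin r' i : ℝ))}

/-- Strongly endotactic network. -/
def StronglyEndotactic (N : CRN d m) : Prop :=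
  ∀ w : Fin d → ℝ, w ≠ 0 →
    (∃ r ∈ N.Rw w, ∑ i, w i * N.cvec r i < 0) ∧
    ∀ r ∈ N.Rw w, ∑ i, w i * N.cvec r i ≤ 0

/-- A siphon. -/
def IsSiphon (N : CRN d m) (P : Finset (Fin d)) : Prop :=
  P.Nonempty ∧ ∀ r, (∃ i ∈ P, 0 < N.cout r i) → ∃ i ∈ P, 0 < N.cin r i

/-- Reactions with substrates only from `P`. -/
def RP (N : CRN d m) (P : Finset (Fin d)) : Set (Fin m) := {r | ∀ i ∉ P, N.cin r i = 0}

/-- Reactions of `R(P)` whose input complex is `w`-maximal within `R(P)`. -/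
def RPw (N : CRN d m) (P : Finset (Fin d)) (w : Fin d → ℝ) : Set (Fin m) :=
  {r | r ∈ N.RP P ∧ ∀ r' ∈ N.RP P, 0 ≤ ∑ i, w i * ((N.cin r i : ℝ) - (N.cin r' i : ℝ))}

/-- The products of reaction `r` lie in `P`. -/
def OutIn (N : CRN d m) (P : Finset (Fin d)) (r : Fin m) : Prop := ∀ i ∉ P, N.cout r i = 0

/-- `w`-dissipative reaction. -/
def Dissipative (N : CRN d m) (P : Finset (Fin d)) (w : Fin d → ℝ) (r : Fin m) : Prop :=
  ¬ N.OutIn P r ∨ ∑ i, w i * N.cvec r i < 0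

/-- `w`-explosive reaction. -/
def Explosive (N : CRN d m) (P : Finset (Fin d)) (w : Fin d → ℝ) (r : Fin m) : Prop :=
  N.OutIn P r ∧ 0 < ∑ i, w i * N.cvec r i

end CRN

/-- Chemical Lyapunov function `U(x) = d + 1 + ∑ x_i (log x_i - 1)`. -/
def U (n : ℕ) (x : Fin n → ℝ) : ℝ := n + 1 + ∑ i, x i * (Real.log (x i) - 1)

/-- Euclidean inner product. -/
def dot {n : ℕ} (a b : Fin n → ℝ) : ℝ := ∑ i, a i * b i

namespace CRN

variable {d m : ℕ}

/-- `h_r^{(v)}(x) = ⟨∇_r^{(v)} U(x), c^r⟩`. -/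
def hrv (N : CRN d m) (P : Finset (Fin d)) (v : ℝ) (r : Fin m) (x : Fin d → ℝ) : ℝ :=
  ∑ i, (if i ∈ P then Real.log (x i)
        else if N.cout r i ≠ 0 then Real.log (N.cvec r i / v) else 0) * N.cvec r i

/-- `Q_r^{(v)}(x) = (U(x + v⁻¹ c^r)/U(x))^v`. -/
def Qrv (N : CRN d m) (v : ℝ) (r : Fin m) (x : Fin d → ℝ) : ℝ :=
  (U d (fun i => x i + N.cvec r i / v) / U d x) ^ v

/-- `L_r^{(v)}(x) = U(x) (Q_r^{(v)}(x) - 1)`. -/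
def Lrv (N : CRN d m) (v : ℝ) (r : Fin m) (x : Fin d → ℝ) : ℝ :=
  U d x * (N.Qrv v r x - 1)

/-- The modified network `C_{u,P}`: outputs of reactions not in `R(P)_u` are restricted to `P`. -/
def modify (N : CRN d m) (P : Finset (Fin d)) (u : Fin d → ℝ) : CRN d m where
  cin := N.cin
  cout := fun r i => if i ∈ P ∨ r ∈ N.RPw P u then N.cout r i else 0
  k := N.k
  k_pos := N.k_pos

/-- The nested sets `super_k` of a frame. -/
def superN (N : CRN d m) (P : Finset (Fin d)) {L : ℕ} (wbar : Fin L → Fin d → ℝ) : ℕ → Set (Fin m)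
  | 0 => N.RP P
  | (k+1) =>
    if h : k < L then
      {r | r ∈ N.superN P wbar k ∧ ∀ r' ∈ N.superN P wbar k,
        0 ≤ ∑ i, wbar ⟨k, h⟩ i * ((N.cin r i : ℝ) - (N.cin r' i : ℝ))}
    else N.superN P wbar k

/-- Species reachable in `k` steps starting from reactions with no inputs. -/
def reachSet (N : CRN d m) : ℕ → Set (Fin d)
  | 0 => ∅
  | (k+1) => N.reachSet k ∪
      {i | ∃ r, 0 < N.cout r i ∧ ∀ l, 0 < N.cin r l → l ∈ N.reachSet k}

/-- The Lagrangian `L(λ, ξ)`. -/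
def Lagr (N : CRN d m) (lamv : Fin m → ℝ) (ξ : Fin d → ℝ) : ℝ :=
  ⨆ θ : Fin d → ℝ, ((∑ i, θ i * ξ i) - ∑ r, lamv r * (Real.exp (∑ i, θ i * N.cvec r i) - 1))

end CRN

/-- A frame: an ordered orthonormal family supported on `P`. -/
structure Frame (d : ℕ) (P : Finset (Fin d)) (dstar : ℕ) where
  w : Fin dstar → Fin d → ℝ
  ortho : ∀ k l, dot (w k) (w l) = if k = l then 1 else 0
  suppP : ∀ k, ∀ i ∉ P, w k i = 0

/-- A `(v',P)`-divergent volume-jet framed by `F` and adapted to the network `N`. -/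
structure VolJet {d m : ℕ} (N : CRN d m) (P : Finset (Fin d)) {dstar : ℕ}
    (F : Frame d P dstar) (v' : ℝ → ℝ) where
  v : ℕ → ℝ
  θ : ℕ → ℝ
  w : ℕ → Fin d → ℝ
  θ_gt : ∀ j, 1 < θ j
  θ_top : Tendsto θ atTop atTop
  conic : ∀ j, ∃ a : Fin dstar → ℝ, (∀ k, 0 ≤ a k) ∧ ∀ i, w j i = ∑ k, a k * F.w k i
  unit : ∀ j, dot (w j) (w j) = 1
  beta_ratio : ∀ (k : ℕ) (hk : k + 1 < dstar),
    Tendsto (fun j => dot (w j) (F.w ⟨k + 1, hk⟩) / dot (w j) (F.w ⟨k, Nat.lt_of_succ_lt hk⟩))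
      atTop (nhds 0)
  adapted_sign : ∀ r ∈ N.RP P, N.OutIn P r →
    (∀ j, dot (w j) (N.cvec r) < 0) ∨ (∀ j, dot (w j) (N.cvec r) = 0) ∨
      (∀ j, 0 < dot (w j) (N.cvec r))
  adapted_theta : ∀ k : Fin dstar,
    (∃ L : ℝ, Tendsto (fun j => θ j ^ dot (w j) (F.w k)) atTop (nhds L)) ∨
      Tendsto (fun j => θ j ^ dot (w j) (F.w k)) atTop atTop
  vx_nat : ∀ j, ∀ i ∈ P, ∃ n : ℕ, 0 < n ∧ v j * θ j ^ (w j i) = n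
  v_big : ∀ j, v' (∑ i ∈ P, θ j ^ (w j i)) < v j
  x_div : Tendsto (fun j => ∑ i ∈ P, θ j ^ (w j i)) atTop atTop

/-- The spatial trajectory of a volume-jet. -/
def VolJet.x {d m : ℕ} {N : CRN d m} {P : Finset (Fin d)} {dstar : ℕ} {F : Frame d P dstar}
    {v' : ℝ → ℝ} (J : VolJet N P F v') (j : ℕ) : Fin d → ℝ :=
  fun i => if i ∈ P then J.θ j ^ (J.w j i) else 0

/-- Reachability sets for a polynomial system. -/
def polyReach (d : ℕ) (Q : Fin d → MvPolynomial (Fin d) ℝ) : ℕ → Set (Fin d)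
  | 0 => ∅
  | (k+1) => polyReach d Q k ∪
      {i | ∃ s : Fin d →₀ ℕ, 0 < MvPolynomial.coeff s (Q i) ∧ ∀ l, s l ≠ 0 → l ∈ polyReach d Q k}

lemma auxKey1 (q l t : ℝ) (hq : 0 ≤ q) (hl : 0 < l) :
    q*t - l*(Real.exp t - 1) ≤ l - q + q*(Real.log q - Real.log l) := by
  rcases eq_or_lt_of_le hq with h|h
  · subst h; simp; nlinarith [Real.exp_pos t]
  · have h1 := Real.add_one_le_exp (t - Real.log q + Real.log l)
    have h2 : Real.exp (t - Real.log q + Real.log l) = Real.exp t * l / q := by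
      rw [Real.exp_add, Real.exp_sub, Real.exp_log h, Real.exp_log hl]; ring
    rw [h2] at h1
    have h3 : (t - Real.log q + Real.log l + 1) * q ≤ Real.exp t * l :=
      (le_div_iff₀ h).mp h1
    nlinarith

lemma auxKey2 (A q Q : ℝ) (hA : 0 ≤ A) (hq : 0 ≤ q) (hqQ : q ≤ Q) (hQ : Real.exp 1 ≤ Q) :
    -q + q*Real.log q + q*A ≤ -Q + Q*Real.log Q + Q*A := by
  have he : (2:ℝ) ≤ Real.exp 1 := by nlinarith [Real.add_one_le_exp (1:ℝ)]
  have hQ1 : 1 ≤ Q := by linarith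
  have hQ0 : (0:ℝ) < Q := by linarith
  have hlogQ : 1 ≤ Real.log Q := (Real.le_log_iff_exp_le hQ0).mpr hQ
  rcases le_or_gt q 1 with h1|h1
  · have hlq : Real.log q ≤ 0 := Real.log_nonpos hq h1
    have h2 : q * Real.log q ≤ 0 := mul_nonpos_of_nonneg_of_nonpos hq hlq
    have h3 : q*A ≤ Q*A := mul_le_mul_of_nonneg_right hqQ hA
    nlinarith
  · have hq0 : (0:ℝ) < q := lt_trans one_pos h1
    have hlq0 : 0 ≤ Real.log q := Real.log_nonneg h1.le
    have hd : Real.log (q/Q) ≤ q/Q - 1 := Real.log_le_sub_one_of_pos (by positivity)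
    have hlog : Real.log (q/Q) = Real.log q - Real.log Q :=
      Real.log_div (ne_of_gt hq0) (ne_of_gt hQ0)
    rw [hlog] at hd
    have h5 : Q * (Real.log q - Real.log Q) ≤ q - Q := by
      have := mul_le_mul_of_nonneg_left hd hQ0.le
      calc Q * (Real.log q - Real.log Q) ≤ Q * (q/Q - 1) := this
        _ = q - Q := by field_simp
    have f2 : q * Real.log q ≤ Q * Real.log q := mul_le_mul_of_nonneg_right hqQ hlq0
    have f3 : q * A ≤ Q * A := mul_le_mul_of_nonneg_right hqQ hA
    nlinarith

theorem stmt16 {d m : ℕ} (hd : 0 < d) (hm : 0 < m) (N : CRN d m)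
    (hcone : ∀ ξ : Fin d → ℝ, ∃ q : Fin m → ℝ, (∀ r, 0 ≤ q r) ∧
      ∀ i, ∑ r, q r * N.cvec r i = ξ i)
    (D : Set (Fin d → ℝ)) (hD : IsCompact D) (hDpos : ∀ x ∈ D, ∀ i, 0 ≤ x i) :
    let lamBar : ℝ := sSup {y | ∃ r, ∃ z ∈ D, y = N.lam r z}
    let cBar : ℝ := ⨆ r, (∑ i, (N.cin r i : ℝ))
    let qBar : ℝ := max (Real.exp 1)
      (sSup {y | ∃ ξ : Fin d → ℝ, (∑ i, |ξ i|) ≤ 1 ∧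
        y = sInf {c | ∃ q : Fin m → ℝ, (∀ r, 0 ≤ q r) ∧
          (∀ i, ∑ r, q r * N.cvec r i = ξ i) ∧ c = ⨆ r', |q r'|}})
    let kMin : ℝ := ⨅ r, min (N.k r) 1
    ∀ z ∈ D, (∀ i, 0 < z i) → ∀ ξ : Fin d → ℝ, (∑ i, |ξ i|) ≤ 1 →
      N.Lagr (fun r => N.lam r z) ξ ≤
        m * ((lamBar - qBar + qBar * Real.log (qBar / kMin)) +
          qBar * cBar * max (-(Real.log (⨅ i, z i))) 0) := by
  intro lamBar cBar qBar kMin z hzD hzpos ξ hξ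
  haveI : Nonempty (Fin m) := ⟨⟨0, hm⟩⟩
  haveI : Nonempty (Fin d) := ⟨⟨0, hd⟩⟩
  -- λ̄ bounds
  have hcont : ContinuousOn (fun x : Fin d → ℝ => ∑ r, N.lam r x) D := by
    apply Continuous.continuousOn
    apply continuous_finset_sum
    intro r _
    exact continuous_const.mul (continuous_finset_prod _ fun i _ => (continuous_apply i).pow _)
  obtain ⟨B, hB⟩ := hD.exists_bound_of_continuousOn hcont
  have hlamnn : ∀ r, ∀ x ∈ D, 0 ≤ N.lam r x := fun r x hx =>
    mul_nonneg (N.k_pos r).le (Finset.prod_nonneg fun i _ => pow_nonneg (hDpos x hx i) _)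
  have hSbdd : BddAbove {y | ∃ r, ∃ z ∈ D, y = N.lam r z} := by
    refine ⟨B, fun y hy => ?_⟩
    obtain ⟨r, x, hx, rfl⟩ := hy
    calc N.lam r x ≤ ∑ r', N.lam r' x :=
          Finset.single_le_sum (fun r' _ => hlamnn r' x hx) (Finset.mem_univ r)
      _ ≤ ‖∑ r', N.lam r' x‖ := le_abs_self _
      _ ≤ B := hB x hx
  have hlam_le : ∀ r, N.lam r z ≤ lamBar := fun r => le_csSup hSbdd ⟨r, z, hzD, rfl⟩
  have hlampos : ∀ r, 0 < N.lam r z := fun r =>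
    mul_pos (N.k_pos r) (Finset.prod_pos fun i _ => pow_pos (hzpos i) _)
  -- kMin
  have hbddk : BddBelow (Set.range fun r => min (N.k r) 1) := (Set.finite_range _).bddBelow
  have hk1 : ∀ r, kMin ≤ min (N.k r) 1 := fun r => ciInf_le hbddk r
  obtain ⟨r₀, hr₀⟩ := Finite.exists_min (fun r : Fin m => min (N.k r) 1)
  have hkeq : kMin = min (N.k r₀) 1 := le_antisymm (ciInf_le hbddk r₀) (le_ciInf hr₀)
  have hk0 : 0 < kMin := by rw [hkeq]; exact lt_min (N.k_pos r₀) one_pos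
  have hk1' : kMin ≤ 1 := (hk1 r₀).trans (min_le_right _ _)
  have hlogk : Real.log kMin ≤ 0 := Real.log_nonpos hk0.le hk1'
  have hlogkr : ∀ r, Real.log kMin ≤ Real.log (N.k r) := fun r =>
    Real.log_le_log hk0 ((hk1 r).trans (min_le_left _ _))
  -- μ
  set μ : ℝ := ⨅ i, z i with hμdef
  have hbddz : BddBelow (Set.range z) := (Set.finite_range _).bddBelow
  have hμle : ∀ i, μ ≤ z i := fun i => ciInf_le hbddz i
  obtain ⟨i₀, hi₀⟩ := Finite.exists_min z
  have hμeq : μ = z i₀ := le_antisymm (ciInf_le hbddz i₀) (le_ciInf hi₀)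
  have hμpos : 0 < μ := hμeq ▸ hzpos i₀
  set s : ℝ := max (-(Real.log μ)) 0 with hsdef
  have hs0 : 0 ≤ s := le_max_right _ _
  have hlogz : ∀ i, -s ≤ Real.log (z i) := by
    intro i
    have h1 : -s ≤ Real.log μ := by
      have := le_max_left (-(Real.log μ)) 0
      linarith
    exact h1.trans (Real.log_le_log hμpos (hμle i))
  -- cBar
  have hbddc : BddAbove (Set.range fun r : Fin m => ∑ i, (N.cin r i : ℝ)) :=
    (Set.finite_range _).bddAbove
  have hcBar : ∀ r, (∑ i, (N.cin r i : ℝ)) ≤ cBar := fun r => le_ciSup hbddc r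
  have hcBar0 : 0 ≤ cBar :=
    le_trans (Finset.sum_nonneg fun i _ => Nat.cast_nonneg _) (hcBar r₀)
  -- A
  set A : ℝ := -Real.log kMin + cBar * s with hAdef
  have hA0 : 0 ≤ A := by
    have := mul_nonneg hcBar0 hs0
    simp only [hAdef]; linarith
  have hloglam : ∀ r, -Real.log (N.lam r z) ≤ A := by
    intro r
    have hprodpos : (0:ℝ) < ∏ i, z i ^ (N.cin r i) :=
      Finset.prod_pos fun i _ => pow_pos (hzpos i) _
    have hexp : Real.log (N.lam r z) =
        Real.log (N.k r) + ∑ i, (N.cin r i : ℝ) * Real.log (z i) := by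
      unfold CRN.lam
      rw [Real.log_mul (ne_of_gt (N.k_pos r)) (ne_of_gt hprodpos),
        Real.log_prod (fun i _ => ne_of_gt (pow_pos (hzpos i) _))]
      simp [Real.log_pow]
    have hsum : -(cBar * s) ≤ ∑ i, (N.cin r i : ℝ) * Real.log (z i) := by
      calc -(cBar * s) ≤ -((∑ i, (N.cin r i : ℝ)) * s) := by
            have := mul_le_mul_of_nonneg_right (hcBar r) hs0
            linarith
        _ = ∑ i, (N.cin r i : ℝ) * (-s) := by rw [Finset.sum_mul]; ring_nf; simp [Finset.mul_sum]; exact Finset.sum_congr rfl fun _ _ => mul_comm _ _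
        _ ≤ ∑ i, (N.cin r i : ℝ) * Real.log (z i) :=
            Finset.sum_le_sum fun i _ =>
              mul_le_mul_of_nonneg_left (hlogz i) (Nat.cast_nonneg _)
    have := hlogkr r
    simp only [hAdef]
    rw [hexp] at *
    linarith
  -- qBar basics
  have hqBar_e : Real.exp 1 ≤ qBar := le_max_left _ _
  have hqBarpos : 0 < qBar := lt_of_lt_of_le (Real.exp_pos 1) hqBar_e
  -- representation infrastructure
  choose qp hqp0 hqprep using fun i => hcone (Pi.single (M := fun _ : Fin d => ℝ) i 1)
  choose qn hqn0 hqnrep using fun i => hcone (fun j => -(Pi.single (M := fun _ : Fin d => ℝ) i 1 j))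
  set M : ℝ := ∑ i, ∑ r, (qp i r + qn i r) with hMdef
  have hrep : ∀ ξ' : Fin d → ℝ, (∑ i, |ξ' i|) ≤ 1 → ∃ q : Fin m → ℝ,
      (∀ r, 0 ≤ q r) ∧ (∀ j, ∑ r, q r * N.cvec r j = ξ' j) ∧ ∀ r, q r ≤ M := by
    intro ξ' hξ'
    refine ⟨fun r => ∑ i, (max (ξ' i) 0 * qp i r + max (-(ξ' i)) 0 * qn i r), ?_, ?_, ?_⟩
    · intro r
      exact Finset.sum_nonneg fun i _ => add_nonneg
        (mul_nonneg (le_max_right _ _) (hqp0 i r))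
        (mul_nonneg (le_max_right _ _) (hqn0 i r))
    · intro j
      have heq : ∑ r, (∑ i, (max (ξ' i) 0 * qp i r + max (-(ξ' i)) 0 * qn i r)) * N.cvec r j
          = ∑ i, (max (ξ' i) 0 * (∑ r, qp i r * N.cvec r j)
              + max (-(ξ' i)) 0 * (∑ r, qn i r * N.cvec r j)) := by
        simp only [Finset.sum_mul]
        rw [Finset.sum_comm]
        apply Finset.sum_congr rfl; intro i _
        rw [Finset.mul_sum, Finset.mul_sum, ← Finset.sum_add_distrib]
        apply Finset.sum_congr rfl; intro r _; ring
      rw [heq]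
      have heq2 : ∀ i, max (ξ' i) 0 * (∑ r, qp i r * N.cvec r j)
              + max (-(ξ' i)) 0 * (∑ r, qn i r * N.cvec r j)
          = ξ' i * Pi.single (M := fun _ : Fin d => ℝ) i 1 j := by
        intro i
        rw [hqprep i j, hqnrep i j]
        have : max (ξ' i) 0 - max (-(ξ' i)) 0 = ξ' i := by
          rcases le_total (ξ' i) 0 with h|h
          · rw [max_eq_right h, max_eq_left (by linarith)]; ring
          · rw [max_eq_left h, max_eq_right (by linarith)]; ring
        linear_combination (Pi.single (M := fun _ : Fin d => ℝ) i 1 j) * this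
      simp only [heq2]
      simp [Pi.single_apply]
    · intro r
      have hterm : ∀ i, max (ξ' i) 0 * qp i r + max (-(ξ' i)) 0 * qn i r
          ≤ qp i r + qn i r := by
        intro i
        have habs : |ξ' i| ≤ 1 :=
          le_trans (Finset.single_le_sum (f := fun i => |ξ' i|)
            (fun i _ => abs_nonneg _) (Finset.mem_univ i)) hξ'
        have h1 : max (ξ' i) 0 ≤ 1 := max_le (le_trans (le_abs_self _) habs) one_pos.le
        have h2 : max (-(ξ' i)) 0 ≤ 1 := max_le (le_trans (neg_le_abs _) habs) one_pos.le
        have := mul_le_mul_of_nonneg_right h1 (hqp0 i r)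
        have := mul_le_mul_of_nonneg_right h2 (hqn0 i r)
        nlinarith
      calc (∑ i, (max (ξ' i) 0 * qp i r + max (-(ξ' i)) 0 * qn i r))
          ≤ ∑ i, (qp i r + qn i r) := Finset.sum_le_sum fun i _ => hterm i
        _ ≤ M := by
            rw [hMdef]
            apply Finset.sum_le_sum
            intro i _
            exact Finset.single_le_sum (f := fun r' => qp i r' + qn i r')
              (fun r' _ => add_nonneg (hqp0 i r') (hqn0 i r')) (Finset.mem_univ r)
  -- the inner sets of qBar
  set Tset : (Fin d → ℝ) → Set ℝ := fun ξ'' => {c | ∃ q : Fin m → ℝ, (∀ r, 0 ≤ q r) ∧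
      (∀ i, ∑ r, q r * N.cvec r i = ξ'' i) ∧ c = ⨆ r', |q r'|} with hTdef
  set Sset : Set ℝ := {y | ∃ ξ'' : Fin d → ℝ, (∑ i, |ξ'' i|) ≤ 1 ∧ y = sInf (Tset ξ'')}
    with hSdef
  have hqBar_eq : qBar = max (Real.exp 1) (sSup Sset) := rfl
  have habsbdd : ∀ q : Fin m → ℝ, BddAbove (Set.range fun r => |q r|) := fun q =>
    (Set.finite_range _).bddAbove
  have hTlow : ∀ ξ'' : Fin d → ℝ, BddBelow (Tset ξ'') := by
    intro ξ''
    refine ⟨0, fun c hc => ?_⟩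
    obtain ⟨q, hq0, hqr, rfl⟩ := hc
    exact le_trans (abs_nonneg (q r₀)) (le_ciSup (habsbdd q) r₀)
  have hTmem : ∀ ξ'' : Fin d → ℝ, (∑ i, |ξ'' i|) ≤ 1 →
      ∃ c ∈ Tset ξ'', c ≤ M := by
    intro ξ'' hb
    obtain ⟨q, hq0, hqr, hqM⟩ := hrep ξ'' hb
    refine ⟨⨆ r', |q r'|, ⟨q, hq0, hqr, rfl⟩, ?_⟩
    exact ciSup_le fun r => by rw [abs_of_nonneg (hq0 r)]; exact hqM r
  have hSsetbdd : BddAbove Sset := by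
    refine ⟨M, fun y hy => ?_⟩
    obtain ⟨ξ'', hb, rfl⟩ := hy
    obtain ⟨c, hcT, hcM⟩ := hTmem ξ'' hb
    exact csInf_le_of_le (hTlow ξ'') hcT hcM
  have hyle : sInf (Tset ξ) ≤ qBar := by
    rw [hqBar_eq]
    exact le_trans (le_csSup hSsetbdd ⟨ξ, hξ, rfl⟩) (le_max_right _ _)
  have hTne : (Tset ξ).Nonempty := by
    obtain ⟨c, hcT, _⟩ := hTmem ξ hξ; exact ⟨c, hcT⟩
  -- main bound for any Q' > qBar
  have main : ∀ Q', qBar < Q' →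
      N.Lagr (fun r => N.lam r z) ξ ≤ m * (lamBar + (-Q' + Q' * Real.log Q' + Q' * A)) := by
    intro Q' hQ'
    obtain ⟨c, hcT, hclt⟩ := exists_lt_of_csInf_lt hTne (lt_of_le_of_lt hyle hQ')
    obtain ⟨q, hq0, hqrep, hceq⟩ := hcT
    have hqlt : ∀ r, q r ≤ Q' := by
      intro r
      have h1 : |q r| ≤ c := by rw [hceq]; exact le_ciSup (habsbdd q) r
      exact le_of_lt (lt_of_le_of_lt (le_trans (le_abs_self _) h1) hclt)
    have hQe : Real.exp 1 ≤ Q' := le_trans hqBar_e hQ'.le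
    rw [CRN.Lagr]
    apply ciSup_le
    intro θ
    have step : ∀ r, q r * (∑ i, θ i * N.cvec r i)
        - N.lam r z * (Real.exp (∑ i, θ i * N.cvec r i) - 1)
        ≤ lamBar + (-Q' + Q' * Real.log Q' + Q' * A) := by
      intro r
      have k1 := auxKey1 (q r) (N.lam r z) (∑ i, θ i * N.cvec r i) (hq0 r) (hlampos r)
      have k2 := auxKey2 A (q r) Q' hA0 (hq0 r) (hqlt r) hQe
      have hm1 : q r * (-Real.log (N.lam r z)) ≤ q r * A :=
        mul_le_mul_of_nonneg_left (hloglam r) (hq0 r)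
      have e1 : q r * (Real.log (q r) - Real.log (N.lam r z))
          = q r * Real.log (q r) + q r * (-Real.log (N.lam r z)) := by ring
      have := hlam_le r
      linarith [k1, k2, hm1, e1]
    have hswap : ∑ i, θ i * ξ i = ∑ r, q r * (∑ i, θ i * N.cvec r i) := by
      simp only [← hqrep, Finset.mul_sum]
      rw [Finset.sum_comm]
      apply Finset.sum_congr rfl
      intro r _
      apply Finset.sum_congr rfl
      intro i _
      ring
    rw [hswap, ← Finset.sum_sub_distrib]
    calc ∑ r, (q r * (∑ i, θ i * N.cvec r i)
          - N.lam r z * (Real.exp (∑ i, θ i * N.cvec r i) - 1))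
        ≤ ∑ _r : Fin m, (lamBar + (-Q' + Q' * Real.log Q' + Q' * A)) :=
          Finset.sum_le_sum fun r _ => step r
      _ = m * (lamBar + (-Q' + Q' * Real.log Q' + Q' * A)) := by
          rw [Finset.sum_const, Finset.card_univ, Fintype.card_fin, nsmul_eq_mul]
  -- pass to the limit Q' → qBar⁺
  set g : ℝ → ℝ := fun Q => m * (lamBar + (-Q + Q * Real.log Q + Q * A)) with hgdef
  have hgc : ContinuousAt g qBar := by
    apply ContinuousAt.mul continuousAt_const
    apply ContinuousAt.add continuousAt_const
    exact (continuousAt_id.neg.add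
      (continuousAt_id.mul (Real.continuousAt_log (ne_of_gt hqBarpos)))).add
      (continuousAt_id.mul continuousAt_const)
  have hlim : Tendsto g (nhdsWithin qBar (Set.Ioi qBar)) (nhds (g qBar)) :=
    (hgc.continuousWithinAt : ContinuousWithinAt g (Set.Ioi qBar) qBar)
  have hle : N.Lagr (fun r => N.lam r z) ξ ≤ g qBar :=
    ge_of_tendsto hlim (eventually_nhdsWithin_of_forall fun Q' hQ' => main Q' hQ')
  calc N.Lagr (fun r => N.lam r z) ξ ≤ g qBar := hle
    _ = m * ((lamBar - qBar + qBar * Real.log (qBar / kMin)) + qBar * cBar * s) := by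
        rw [hgdef]
        simp only
        rw [Real.log_div (ne_of_gt hqBarpos) (ne_of_gt hk0), hAdef]
        ring

end
end

section
/- Let D ⊂ ℝ₊^d be compact and suppose there exist β ∈ (0,1), ε ∈ (0,1/3), finitely many open balls B_j covering D, and vectors v^{(j)} ∈ ℝ^d with ‖v^{(j)}‖₁ ≤ 1, such that for every j, every x ∈ D ∩ B_j^ε (the ε-neighborhood of B_j) and every 0 ≤ s ≤ ε/β, one has min_{x̃ ∈ ℝ^d \ D} ‖x + s·v^{(j)} − x̃‖_∞ ≥ β·s. Suppose also the conic hull of {c^r}_{r∈R} equals ℝ^d. Then there exist κ ≥ 1, ε₀ > 0 and a function C : (0,∞) → ℝ₊ with C(t) → 0 as t → 0, such that for any x, y ∈ D with ‖x − y‖₁ < ε₀, setting t := κ‖x − y‖₁, there exists an absolutely continuous path z : [0,t] → D with z(0) = x, z(t) = y and I_{x,t}(z) ≤ C(t). -/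
open Real Filter Finset Set MeasureTheory
open scoped Classical

noncomputable section

section AuxLemmas

lemma aux_exp_bound (q lam u : ℝ) (hq : 0 ≤ q) (hl : 0 < lam) :
    q * u - lam * (Real.exp u - 1) ≤ lam + q * max 0 (Real.log q - Real.log lam) := by
  rcases eq_or_lt_of_le hq with rfl | hq
  · have h1 := Real.exp_pos u
    simp only [zero_mul, zero_add, zero_sub]
    nlinarith
  · set L := Real.log q - Real.log lam with hL
    have h1 : (u - L) + 1 ≤ Real.exp (u - L) := Real.add_one_le_exp _
    have h2 : q * Real.exp (u - L) = lam * Real.exp u := by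
      rw [hL, Real.exp_sub, Real.exp_sub, Real.exp_log hq, Real.exp_log hl]
      field_simp
    have h3 : q * ((u - L) + 1) ≤ q * Real.exp (u - L) :=
      mul_le_mul_of_nonneg_left h1 hq.le
    have h4 : q * L ≤ q * max 0 L := mul_le_mul_of_nonneg_left (le_max_right 0 L) hq.le
    nlinarith
  
namespace CRN

variable {d m : ℕ}

lemma value_le (N : CRN d m) (lamv : Fin m → ℝ) (hl : ∀ r, 0 < lamv r)
    (ξ : Fin d → ℝ) (q : Fin m → ℝ) (hq : ∀ r, 0 ≤ q r)
    (hrep : ∀ i, ∑ r, q r * N.cvec r i = ξ i) (θ : Fin d → ℝ) :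
    ((∑ i, θ i * ξ i) - ∑ r, lamv r * (Real.exp (∑ i, θ i * N.cvec r i) - 1))
      ≤ ∑ r, (lamv r + q r * max 0 (Real.log (q r) - Real.log (lamv r))) := by
  have key : ∑ i, θ i * ξ i = ∑ r, q r * (∑ i, θ i * N.cvec r i) := by
    calc ∑ i, θ i * ξ i = ∑ i, ∑ r, q r * (θ i * N.cvec r i) := by
          refine Finset.sum_congr rfl fun i _ => ?_
          rw [← hrep i, Finset.mul_sum]
          exact Finset.sum_congr rfl fun r _ => by ring
      _ = ∑ r, q r * (∑ i, θ i * N.cvec r i) := by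
          rw [Finset.sum_comm]
          exact Finset.sum_congr rfl fun r _ => by rw [Finset.mul_sum]
  rw [key, ← Finset.sum_sub_distrib]
  exact Finset.sum_le_sum fun r _ => aux_exp_bound (q r) (lamv r) _ (hq r) (hl r)

lemma Lagr_le (N : CRN d m) (lamv : Fin m → ℝ) (hl : ∀ r, 0 < lamv r)
    (ξ : Fin d → ℝ) (q : Fin m → ℝ) (hq : ∀ r, 0 ≤ q r)
    (hrep : ∀ i, ∑ r, q r * N.cvec r i = ξ i) :
    N.Lagr lamv ξ ≤ ∑ r, (lamv r + q r * max 0 (Real.log (q r) - Real.log (lamv r))) :=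
  ciSup_le fun θ => N.value_le lamv hl ξ q hq hrep θ

lemma Lagr_bddAbove (N : CRN d m) (lamv : Fin m → ℝ) (hl : ∀ r, 0 < lamv r)
    (ξ : Fin d → ℝ) (q : Fin m → ℝ) (hq : ∀ r, 0 ≤ q r)
    (hrep : ∀ i, ∑ r, q r * N.cvec r i = ξ i) :
    BddAbove (Set.range fun θ : Fin d → ℝ =>
      ((∑ i, θ i * ξ i) - ∑ r, lamv r * (Real.exp (∑ i, θ i * N.cvec r i) - 1))) := by
  refine ⟨∑ r, (lamv r + q r * max 0 (Real.log (q r) - Real.log (lamv r))), ?_⟩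
  rintro _ ⟨θ, rfl⟩
  exact N.value_le lamv hl ξ q hq hrep θ

lemma Lagr_nonneg (N : CRN d m) (lamv : Fin m → ℝ) (ξ : Fin d → ℝ) :
    0 ≤ N.Lagr lamv ξ := by
  have h0 : ((∑ i, (0 : Fin d → ℝ) i * ξ i)
      - ∑ r, lamv r * (Real.exp (∑ i, (0 : Fin d → ℝ) i * N.cvec r i) - 1)) = 0 := by
    simp
  by_cases hb : BddAbove (Set.range fun θ : Fin d → ℝ =>
      ((∑ i, θ i * ξ i) - ∑ r, lamv r * (Real.exp (∑ i, θ i * N.cvec r i) - 1)))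
  · rw [CRN.Lagr]
    calc (0:ℝ) = _ := h0.symm
      _ ≤ _ := le_ciSup hb 0
  · rw [CRN.Lagr, Real.iSup_of_not_bddAbove hb]

lemma lam_continuous (N : CRN d m) (r : Fin m) : Continuous (N.lam r) := by
  unfold CRN.lam
  exact continuous_const.mul (continuous_finset_prod _ fun i _ => (continuous_apply i).pow _)

lemma lam_pos (N : CRN d m) (r : Fin m) {x : Fin d → ℝ} (hx : ∀ i, 0 < x i) :
    0 < N.lam r x :=
  mul_pos (N.k_pos r) (Finset.prod_pos fun i _ => pow_pos (hx i) _)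

lemma lam_lower (N : CRN d m) (r : Fin m) {x : Fin d → ℝ} {φ : ℝ} (hφ : 0 ≤ φ)
    (hx : ∀ i, φ ≤ x i) : N.k r * φ ^ (∑ i, N.cin r i) ≤ N.lam r x := by
  rw [CRN.lam, ← Finset.prod_pow_eq_pow_sum]
  exact mul_le_mul_of_nonneg_left
    (Finset.prod_le_prod (fun i _ => pow_nonneg hφ _)
      (fun i _ => pow_le_pow_left₀ hφ (hx i) _)) (N.k_pos r).le

lemma lam_upper (N : CRN d m) (r : Fin m) {x : Fin d → ℝ} {X : ℝ}
    (hx0 : ∀ i, 0 ≤ x i) (hx : ∀ i, x i ≤ X) :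
    N.lam r x ≤ N.k r * X ^ (∑ i, N.cin r i) := by
  rw [CRN.lam, ← Finset.prod_pow_eq_pow_sum]
  exact mul_le_mul_of_nonneg_left
    (Finset.prod_le_prod (fun i _ => pow_nonneg (hx0 i) _)
      (fun i _ => pow_le_pow_left₀ (hx0 i) (hx i) _)) (N.k_pos r).le

lemma lsc_aux (N : CRN d m)
    (hcone : ∀ ξ : Fin d → ℝ, ∃ q : Fin m → ℝ, (∀ r, 0 ≤ q r) ∧
      ∀ i, ∑ r, q r * N.cvec r i = ξ i)
    (zf : ℝ → Fin d → ℝ) (hzf : Continuous zf) (ξ : Fin d → ℝ)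
    (U : Set ℝ) (hU : IsOpen U) (hpos : ∀ s ∈ U, ∀ i, 0 < zf s i)
    (s₀ : ℝ) (hs₀ : s₀ ∈ U) (c : ℝ) (hc : c < N.Lagr (fun r => N.lam r (zf s₀)) ξ) :
    ∀ᶠ s in nhds s₀, s ∈ U ∧ c < N.Lagr (fun r => N.lam r (zf s)) ξ := by
  obtain ⟨q, hq, hrep⟩ := hcone ξ
  have hbdd : ∀ s ∈ U, BddAbove (Set.range fun θ : Fin d → ℝ =>
      ((∑ i, θ i * ξ i) - ∑ r, (N.lam r (zf s)) * (Real.exp (∑ i, θ i * N.cvec r i) - 1))) :=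
    fun s hs => N.Lagr_bddAbove _ (fun r => N.lam_pos r (hpos s hs)) ξ q hq hrep
  rw [CRN.Lagr] at hc
  obtain ⟨θ₀, hθ₀⟩ := (lt_ciSup_iff (hbdd s₀ hs₀)).mp hc
  have hval : Continuous fun s =>
      ((∑ i, θ₀ i * ξ i) - ∑ r, (N.lam r (zf s)) * (Real.exp (∑ i, θ₀ i * N.cvec r i) - 1)) := by
    refine continuous_const.sub (continuous_finset_sum _ fun r _ => ?_)
    exact ((N.lam_continuous r).comp hzf).mul continuous_const
  have hopen : IsOpen {s | c < ((∑ i, θ₀ i * ξ i)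
      - ∑ r, (N.lam r (zf s)) * (Real.exp (∑ i, θ₀ i * N.cvec r i) - 1))} :=
    isOpen_lt continuous_const hval
  filter_upwards [hU.mem_nhds hs₀, hopen.mem_nhds hθ₀] with s hsU hsv
  refine ⟨hsU, ?_⟩
  rw [CRN.Lagr]
  exact lt_of_lt_of_le hsv (le_ciSup (hbdd s hsU) θ₀)

end CRN

lemma aux_log_rpow {u : ℝ} (hu : 0 < u) :
    max 0 (-Real.log u) ≤ 2 * u ^ (-(1/2) : ℝ) := by
  have hru : 0 < u ^ (-(1/2) : ℝ) := Real.rpow_pos_of_pos hu _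
  rcases le_or_gt 1 u with h | h
  · have hlog : 0 ≤ Real.log u := Real.log_nonneg h
    apply max_le (by positivity)
    linarith
  · have hsq : 0 < Real.sqrt u := Real.sqrt_pos.mpr hu
    have h1 : -Real.log u = 2 * Real.log (Real.sqrt u)⁻¹ := by
      rw [Real.log_inv, Real.log_sqrt hu.le]; ring
    have h2 : Real.log (Real.sqrt u)⁻¹ ≤ (Real.sqrt u)⁻¹ - 1 :=
      Real.log_le_sub_one_of_pos (by positivity)
    have h3 : (Real.sqrt u)⁻¹ = u ^ (-(1/2) : ℝ) := by
      rw [Real.rpow_neg hu.le, ← Real.sqrt_eq_rpow]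
    have hmax : max 0 (-Real.log u) ≤ max 0 (2 * ((Real.sqrt u)⁻¹ - 1)) := by
      apply max_le (le_max_left _ _)
      rw [h1]
      exact le_max_of_le_right (by linarith)
    calc max 0 (-Real.log u) ≤ max 0 (2 * ((Real.sqrt u)⁻¹ - 1)) := hmax
      _ ≤ 2 * (Real.sqrt u)⁻¹ := by
          apply max_le (by positivity)
          nlinarith [hsq]
      _ = 2 * u ^ (-(1/2) : ℝ) := by rw [h3]

end AuxLemmas

section Aux2

lemma aux_max_add (p q : ℝ) : max 0 (p + q) ≤ max 0 p + max 0 q :=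
  max_le (by positivity) (add_le_add (le_max_right _ _) (le_max_right _ _))

lemma aux_qgen {d m : ℕ} (N : CRN d m)
    (qp qm : Fin d → Fin m → ℝ) (hqp0 : ∀ i r, 0 ≤ qp i r) (hqm0 : ∀ i r, 0 ≤ qm i r)
    (hqprep : ∀ i l, ∑ r, qp i r * N.cvec r l = (Pi.single i 1 : Fin d → ℝ) l)
    (hqmrep : ∀ i l, ∑ r, qm i r * N.cvec r l = -(Pi.single i 1 : Fin d → ℝ) l)
    (ξ : Fin d → ℝ) (hξ : (∑ i, |ξ i|) ≤ 1) :
    ∃ q : Fin m → ℝ, (∀ r, 0 ≤ q r ∧ q r ≤ 1 + ∑ r', ∑ i, (qp i r' + qm i r')) ∧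
      ∀ l, ∑ r, q r * N.cvec r l = ξ l := by
  have hb : ∀ i, |ξ i| ≤ 1 := fun i =>
    le_trans (Finset.single_le_sum (f := fun i => |ξ i|) (fun i _ => abs_nonneg _)
      (Finset.mem_univ i)) hξ
  refine ⟨fun r => ∑ i, (max (ξ i) 0 * qp i r + max (-ξ i) 0 * qm i r),
    fun r => ⟨?_, ?_⟩, ?_⟩
  · apply Finset.sum_nonneg
    intro i _
    have h1 := hqp0 i r; have h2 := hqm0 i r
    have h3 : (0:ℝ) ≤ max (ξ i) 0 := le_max_right _ _
    have h4 : (0:ℝ) ≤ max (-ξ i) 0 := le_max_right _ _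
    positivity
  · have h1 : ∀ i ∈ Finset.univ,
        max (ξ i) 0 * qp i r + max (-ξ i) 0 * qm i r ≤ qp i r + qm i r := by
      intro i _
      have h2 : max (ξ i) 0 ≤ 1 := max_le (le_trans (le_abs_self _) (hb i)) zero_le_one
      have h3 : max (-ξ i) 0 ≤ 1 :=
        max_le (le_trans (le_abs_self _) (le_trans (abs_neg (ξ i)).le (hb i))) zero_le_one
      have h4 := hqp0 i r; have h5 := hqm0 i r
      nlinarith [le_max_right (ξ i) (0:ℝ), le_max_right (-ξ i) (0:ℝ)]
    calc ∑ i, (max (ξ i) 0 * qp i r + max (-ξ i) 0 * qm i r)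
        ≤ ∑ i, (qp i r + qm i r) := Finset.sum_le_sum h1
      _ ≤ ∑ r', ∑ i, (qp i r' + qm i r') := by
          refine Finset.single_le_sum (f := fun r' => ∑ i, (qp i r' + qm i r')) ?_
            (Finset.mem_univ r)
          intro r' _
          exact Finset.sum_nonneg fun i _ => add_nonneg (hqp0 i r') (hqm0 i r')
      _ ≤ 1 + ∑ r', ∑ i, (qp i r' + qm i r') := by linarith
  · intro l
    have key : ∀ i, ∑ r, (max (ξ i) 0 * qp i r + max (-ξ i) 0 * qm i r) * N.cvec r l
        = max (ξ i) 0 * (Pi.single i 1 : Fin d → ℝ) l + max (-ξ i) 0 * (-((Pi.single i 1 : Fin d → ℝ) l)) := by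
      intro i
      calc ∑ r, (max (ξ i) 0 * qp i r + max (-ξ i) 0 * qm i r) * N.cvec r l
          = ∑ r, (max (ξ i) 0 * (qp i r * N.cvec r l)
              + max (-ξ i) 0 * (qm i r * N.cvec r l)) :=
            Finset.sum_congr rfl fun r _ => by ring
        _ = max (ξ i) 0 * (∑ r, qp i r * N.cvec r l)
              + max (-ξ i) 0 * (∑ r, qm i r * N.cvec r l) := by
            rw [Finset.sum_add_distrib, ← Finset.mul_sum, ← Finset.mul_sum]
        _ = _ := by rw [hqprep i l, hqmrep i l]
    calc ∑ r, (∑ i, (max (ξ i) 0 * qp i r + max (-ξ i) 0 * qm i r)) * N.cvec r l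
        = ∑ r, ∑ i, (max (ξ i) 0 * qp i r + max (-ξ i) 0 * qm i r) * N.cvec r l := by
          exact Finset.sum_congr rfl fun r _ => Finset.sum_mul _ _ _
      _ = ∑ i, ∑ r, (max (ξ i) 0 * qp i r + max (-ξ i) 0 * qm i r) * N.cvec r l :=
          Finset.sum_comm
      _ = ∑ i, (max (ξ i) 0 * (Pi.single i 1 : Fin d → ℝ) l + max (-ξ i) 0 * (-((Pi.single i 1 : Fin d → ℝ) l))) :=
          Finset.sum_congr rfl fun i _ => key i
      _ = ξ l := by
          simp only [Pi.single_apply, mul_ite, mul_one, mul_zero, mul_neg, neg_zero]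
          rw [Finset.sum_add_distrib, Finset.sum_ite_eq, Finset.sum_neg_distrib,
            Finset.sum_ite_eq]
          simp only [Finset.mem_univ, if_true]
          rw [← sub_eq_add_neg, max_zero_sub_max_neg_zero_eq_self]
    
end Aux2

set_option maxHeartbeats 1000000
theorem stmt17 {d m : ℕ} (N : CRN d m)
    (D : Set (Fin d → ℝ)) (hD : IsCompact D) (hDpos : ∀ x ∈ D, ∀ i, 0 ≤ x i)
    (β ε : ℝ) (hβ0 : 0 < β) (hβ1 : β < 1) (hε0 : 0 < ε) (hε3 : ε < 1/3)
    (n : ℕ) (cent : Fin n → Fin d → ℝ) (rad : Fin n → ℝ)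
    (hcover : D ⊆ ⋃ j, Metric.ball (cent j) (rad j))
    (vv : Fin n → Fin d → ℝ) (hvv : ∀ j, (∑ i, |vv j i|) ≤ 1)
    (hsep : ∀ j, ∀ x ∈ D ∩ Metric.ball (cent j) (rad j + ε), ∀ s : ℝ, 0 ≤ s → s ≤ ε / β →
      ∀ y ∉ D, β * s ≤ ‖(fun i => x i + s * vv j i) - y‖)
    (hcone : ∀ ξ : Fin d → ℝ, ∃ q : Fin m → ℝ, (∀ r, 0 ≤ q r) ∧
      ∀ i, ∑ r, q r * N.cvec r i = ξ i) :
    ∃ κ : ℝ, 1 ≤ κ ∧ ∃ ε₀ > (0:ℝ), ∃ C : ℝ → ℝ,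
      Tendsto C (nhdsWithin 0 (Set.Ioi 0)) (nhds 0) ∧
      ∀ x ∈ D, ∀ y ∈ D, (∑ i, |x i - y i|) < ε₀ →
        ∃ g : ℝ → Fin d → ℝ,
          IntervalIntegrable g volume 0 (κ * ∑ i, |x i - y i|) ∧
          (∀ s ∈ Set.Icc (0:ℝ) (κ * ∑ i, |x i - y i|),
            (fun i' => x i' + (∫ u in (0:ℝ)..s, g u) i') ∈ D) ∧
          (fun i' => x i' + (∫ u in (0:ℝ)..(κ * ∑ i, |x i - y i|), g u) i') = y ∧
          IntervalIntegrable (fun s =>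
              N.Lagr (fun r => N.lam r (fun i' => x i' + (∫ u in (0:ℝ)..s, g u) i')) (g s))
            volume 0 (κ * ∑ i, |x i - y i|) ∧
          (∫ s in (0:ℝ)..(κ * ∑ i, |x i - y i|),
              N.Lagr (fun r => N.lam r (fun i' => x i' + (∫ u in (0:ℝ)..s, g u) i')) (g s))
            ≤ C (κ * ∑ i, |x i - y i|) := by
  classical
  -- upper bound for coordinates on D
  obtain ⟨X0, hX0⟩ := isBounded_iff_forall_norm_le.mp hD.isBounded
  set X : ℝ := max X0 1 with hXdef
  have hX1 : (1:ℝ) ≤ X := le_max_right _ _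
  have hXc : ∀ z ∈ D, ∀ i, z i ≤ X := by
    intro z hz i
    calc z i ≤ |z i| := le_abs_self _
      _ ≤ ‖z‖ := by rw [← Real.norm_eq_abs]; exact norm_le_pi_norm z i
      _ ≤ X0 := hX0 z hz
      _ ≤ X := le_max_left _ _
  -- decomposition data
  set qp : Fin d → Fin m → ℝ := fun i => (hcone (Pi.single i 1)).choose with hqpdef
  set qm : Fin d → Fin m → ℝ := fun i => (hcone (-Pi.single i 1)).choose with hqmdef
  have hqp0 : ∀ i r, 0 ≤ qp i r := fun i => (hcone (Pi.single i 1)).choose_spec.1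
  have hqm0 : ∀ i r, 0 ≤ qm i r := fun i => (hcone (-Pi.single i 1)).choose_spec.1
  have hqprep : ∀ i l, ∑ r, qp i r * N.cvec r l = (Pi.single i 1 : Fin d → ℝ) l :=
    fun i => (hcone (Pi.single i 1)).choose_spec.2
  have hqmrep : ∀ i l, ∑ r, qm i r * N.cvec r l = -(Pi.single i 1 : Fin d → ℝ) l := by
    intro i l
    rw [(hcone (-Pi.single i 1)).choose_spec.2 l]
    simp
  set Q : ℝ := 1 + ∑ r', ∑ i, (qp i r' + qm i r') with hQdef
  have hQ1 : 1 ≤ Q := by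
    have h : 0 ≤ ∑ r', ∑ i, (qp i r' + qm i r') :=
      Finset.sum_nonneg fun r' _ => Finset.sum_nonneg fun i _ =>
        add_nonneg (hqp0 i r') (hqm0 i r')
    rw [hQdef]; linarith
  have hQ0 : (0:ℝ) < Q := lt_of_lt_of_le one_pos hQ1
  have hqgen : ∀ ξ : Fin d → ℝ, (∑ i, |ξ i|) ≤ 1 → ∃ q : Fin m → ℝ,
      (∀ r, 0 ≤ q r ∧ q r ≤ Q) ∧ ∀ l, ∑ r, q r * N.cvec r l = ξ l :=
    fun ξ hξ => aux_qgen N qp qm hqp0 hqm0 hqprep hqmrep ξ hξ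
  -- constants
  set κ : ℝ := 4 / β + 1 with hκdef
  have hκ1 : 1 ≤ κ := by
    have h4 : 0 < 4 / β := by positivity
    rw [hκdef]; linarith
  have hκ0 : (0:ℝ) < κ := lt_of_lt_of_le one_pos hκ1
  set c₀ : ℝ := β / κ with hc₀def
  have hc₀ : 0 < c₀ := by rw [hc₀def]; positivity
  set K₁ : ℝ := (∑ r, N.k r * X ^ (∑ i, N.cin r i))
      + Q * ∑ r, max 0 (Real.log Q - Real.log (N.k r)) with hK₁def
  set K₂ : ℝ := Q * ∑ r, ((∑ i, N.cin r i : ℕ) : ℝ) with hK₂def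
  have hK₂0 : 0 ≤ K₂ :=
    mul_nonneg hQ0.le (Finset.sum_nonneg fun r _ => Nat.cast_nonneg _)
  set K₃ : ℝ := K₁ + K₂ * |Real.log c₀| with hK₃def
  have hrpow_int : ∀ a b : ℝ, IntervalIntegrable (fun u : ℝ => u ^ (-(1/2) : ℝ)) volume a b :=
    fun a b => intervalIntegral.intervalIntegrable_rpow' (by norm_num)
  set C : ℝ → ℝ := fun τ => K₃ * τ + (4 * K₂) * ∫ u in (0:ℝ)..τ, u ^ (-(1/2) : ℝ) with hCdef
  refine ⟨κ, hκ1, ε / 2, by positivity, C, ?_, ?_⟩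
  · -- Tendsto C (nhdsWithin 0 (Ioi 0)) (nhds 0)
    have h1 : Tendsto (fun τ : ℝ => K₃ * τ) (nhdsWithin 0 (Set.Ioi 0)) (nhds 0) := by
      have h := (continuous_mul_left K₃).tendsto (0:ℝ)
      simp only [mul_zero] at h
      exact h.mono_left nhdsWithin_le_nhds
    have h5 : Tendsto (fun τ : ℝ => ∫ u in (0:ℝ)..τ, u ^ (-(1/2):ℝ))
        (nhdsWithin 0 (Set.Ioi 0)) (nhds 0) := by
      have hcont : ContinuousOn (fun τ : ℝ => ∫ u in (0:ℝ)..τ, u ^ (-(1/2):ℝ))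
          (Set.uIcc 0 1) :=
        intervalIntegral.continuousOn_primitive_interval' (hrpow_int 0 1) Set.left_mem_uIcc
      have h3 : Tendsto (fun τ : ℝ => ∫ u in (0:ℝ)..τ, u ^ (-(1/2):ℝ))
          (nhdsWithin 0 (Set.uIcc 0 1)) (nhds 0) := by
        have h := hcont 0 Set.left_mem_uIcc
        rw [ContinuousWithinAt, intervalIntegral.integral_same] at h
        exact h
      rw [← nhdsWithin_Ioc_eq_nhdsGT (zero_lt_one (α := ℝ))]
      refine h3.mono_left (nhdsWithin_mono _ ?_)
      rw [Set.uIcc_of_le (zero_le_one (α := ℝ))]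
      exact Set.Ioc_subset_Icc_self
    have h2 : Tendsto (fun τ : ℝ => (4 * K₂) * ∫ u in (0:ℝ)..τ, u ^ (-(1/2):ℝ))
        (nhdsWithin 0 (Set.Ioi 0)) (nhds 0) := by
      have := h5.const_mul (4 * K₂)
      simpa using this
    have := h1.add h2
    simp only [add_zero] at this
    exact this
  intro x hx y hy hδ
  rcases eq_or_ne x y with rfl | hxy
  · -- trivial case  x = y
    have hδ0 : (∑ i, |x i - x i|) = 0 := by simp
    simp only [hδ0, mul_zero]
    refine ⟨fun _ => 0, IntervalIntegrable.refl, ?_, ?_, IntervalIntegrable.refl, ?_⟩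
    · intro s hs
      have hs0 : s = 0 := le_antisymm hs.2 hs.1
      subst hs0
      simpa [intervalIntegral.integral_same] using hx
    · funext i
      simp [intervalIntegral.integral_same]
    · rw [intervalIntegral.integral_same, hCdef]
      simp [intervalIntegral.integral_same]
  -- main case x ≠ y
  have hδpos : 0 < ∑ i, |x i - y i| := by
    obtain ⟨i, hi⟩ : ∃ i, x i ≠ y i := by
      by_contra h
      push_neg at h
      exact hxy (funext h)
    exact Finset.sum_pos' (fun i _ => abs_nonneg _)
      ⟨i, Finset.mem_univ i, abs_pos.mpr (sub_ne_zero.mpr hi)⟩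
  set δ : ℝ := ∑ i, |x i - y i| with hδdef
  obtain ⟨j, hjx⟩ : ∃ j, x ∈ Metric.ball (cent j) (rad j) := by
    have h := hcover hx
    simpa [Set.mem_iUnion] using h
  set v : Fin d → ℝ := vv j with hvdef
  set a : ℝ := 2 * δ / β with hadef
  set t : ℝ := κ * δ with htdef
  have ha0 : 0 < a := by rw [hadef]; positivity
  have hβa : β * a = 2 * δ := by rw [hadef]; field_simp
  have htsplit : t = a + δ + a := by rw [htdef, hadef, hκdef]; field_simp; ring
  have hδε : δ < ε / 2 := hδ
  have haε : a ≤ ε / β := by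
    rw [hadef]
    gcongr
    linarith
  have h0t : (0:ℝ) ≤ t := by rw [htdef]; positivity
  have haδt : a + δ < t := by rw [htsplit]; linarith
  have h0aδ : (0:ℝ) < a + δ := by linarith
  -- x and y in the enlarged ball
  have hxball : x ∈ Metric.ball (cent j) (rad j + ε) :=
    Metric.ball_subset_ball (by linarith) hjx
  have hdsum : ∀ l, |x l - y l| ≤ δ := fun l =>
    Finset.single_le_sum (f := fun i => |x i - y i|) (fun i _ => abs_nonneg _)
      (Finset.mem_univ l)
  have hyball : y ∈ Metric.ball (cent j) (rad j + ε) := by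
    have hdxy : dist y x ≤ δ := by
      rw [dist_pi_le_iff hδpos.le]
      intro i
      rw [Real.dist_eq, abs_sub_comm]
      exact hdsum i
    rw [Metric.mem_ball] at hjx ⊢
    calc dist y (cent j) ≤ dist y x + dist x (cent j) := dist_triangle _ _ _
      _ < δ + rad j := by linarith
      _ < rad j + ε := by linarith
  -- basic step lemma
  have hstep : ∀ p : Fin d → ℝ, p ∈ D → p ∈ Metric.ball (cent j) (rad j + ε) →
      ∀ s : ℝ, 0 ≤ s → s ≤ ε / β →
      (fun i => p i + s * v i) ∈ D ∧ ∀ i, β * s ≤ p i + s * v i := by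
    intro p hpD hpB s hs0 hs1
    have hmem : (fun i => p i + s * v i) ∈ D := by
      rcases eq_or_lt_of_le hs0 with rfl | hs
      · simpa using hpD
      · by_contra hnot
        have h1 := hsep j p ⟨hpD, hpB⟩ s hs0 hs1 _ hnot
        rw [sub_self, norm_zero] at h1
        nlinarith
    refine ⟨hmem, fun i => ?_⟩
    by_contra hlt
    push_neg at hlt
    have hci : 0 ≤ p i + s * v i := hDpos _ hmem i
    have hb0 : (0:ℝ) ≤ (p i + s * v i + β * s) / 2 := by linarith
    set y' : Fin d → ℝ :=
      Function.update (fun l => p l + s * v l) i ((p i + s * v i - β * s) / 2) with hy'def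
    have hy'neg : y' i < 0 := by
      rw [hy'def, Function.update_self]
      linarith
    have hy'D : y' ∉ D := fun hmem' => absurd (hDpos _ hmem' i) (not_le.mpr hy'neg)
    have h1 := hsep j p ⟨hpD, hpB⟩ s hs0 hs1 y' hy'D
    have h2 : ‖(fun l => p l + s * v l) - y'‖ ≤ (p i + s * v i + β * s) / 2 := by
      rw [pi_norm_le_iff_of_nonneg hb0]
      intro l
      rw [Pi.sub_apply, Real.norm_eq_abs]
      by_cases hl : l = i
      · subst hl
        rw [hy'def, Function.update_self]
        rw [abs_of_nonneg (by linarith)]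
        linarith
      · rw [hy'def, Function.update_of_ne hl, sub_self, abs_zero]
        exact hb0
    linarith
  -- middle segment lemma
  have hmid : ∀ u : ℝ, 0 ≤ u → u ≤ 1 →
      (fun i => x i + a * v i + u * (y i - x i)) ∈ D ∧
      ∀ i, δ ≤ x i + a * v i + u * (y i - x i) := by
    intro u hu0 hu1
    have habs : ∀ l, |u * (y l - x l)| ≤ δ := by
      intro l
      rw [abs_mul, abs_of_nonneg hu0]
      calc u * |y l - x l| ≤ 1 * |y l - x l| :=
            mul_le_mul_of_nonneg_right hu1 (abs_nonneg _)
        _ = |x l - y l| := by rw [one_mul, abs_sub_comm]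
        _ ≤ δ := hdsum l
    have hmem : (fun i => x i + a * v i + u * (y i - x i)) ∈ D := by
      by_contra hnot
      have h1 := hsep j x ⟨hx, hxball⟩ a ha0.le haε _ hnot
      rw [hβa] at h1
      have h2 : ‖(fun l => x l + a * v l) -
          (fun i => x i + a * v i + u * (y i - x i))‖ ≤ δ := by
        rw [pi_norm_le_iff_of_nonneg hδpos.le]
        intro l
        rw [Pi.sub_apply, Real.norm_eq_abs]
        have he : x l + a * v l - (x l + a * v l + u * (y l - x l))
            = -(u * (y l - x l)) := by ring
        rw [he, abs_neg]
        exact habs l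
      linarith
    refine ⟨hmem, fun i => ?_⟩
    by_contra hlt
    push_neg at hlt
    have hzi : 0 ≤ x i + a * v i + u * (y i - x i) := hDpos _ hmem i
    set zc : ℝ := x i + a * v i + u * (y i - x i) with hzcdef
    set y' : Fin d → ℝ :=
      Function.update (fun l => x l + a * v l + u * (y l - x l)) i ((zc - δ) / 2) with hy'def
    have hy'neg : y' i < 0 := by
      rw [hy'def, Function.update_self]
      linarith
    have hy'D : y' ∉ D := fun hmem' => absurd (hDpos _ hmem' i) (not_le.mpr hy'neg)
    have h1 := hsep j x ⟨hx, hxball⟩ a ha0.le haε y' hy'D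
    rw [hβa] at h1
    have hbb : (0:ℝ) ≤ δ + (zc + δ) / 2 := by linarith
    have h2 : ‖(fun l => x l + a * v l) - y'‖ ≤ δ + (zc + δ) / 2 := by
      rw [pi_norm_le_iff_of_nonneg hbb]
      intro l
      rw [Pi.sub_apply, Real.norm_eq_abs]
      by_cases hl : l = i
      · subst hl
        rw [hy'def, Function.update_self]
        have he : x l + a * v l - (zc - δ) / 2
            = -(u * (y l - x l)) + (zc + δ) / 2 := by rw [hzcdef]; ring
        rw [he]
        calc |(-(u * (y l - x l)) + (zc + δ) / 2)|
            ≤ |(-(u * (y l - x l)))| + |(zc + δ) / 2| := abs_add_le _ _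
          _ ≤ δ + (zc + δ) / 2 := by
              rw [abs_neg, abs_of_nonneg (by linarith : (0:ℝ) ≤ (zc + δ)/2)]
              exact add_le_add_left (habs l) _
      · rw [hy'def, Function.update_of_ne hl]
        have he : x l + a * v l - (x l + a * v l + u * (y l - x l))
            = -(u * (y l - x l)) := by ring
        rw [he, abs_neg]
        linarith [habs l]
    linarith
  -- the path
  set w' : Fin d → ℝ := fun i => (y i - x i) / δ with hwdef
  set g : ℝ → Fin d → ℝ := fun s => if s < a then v else if s < a + δ then w' else -v
    with hgdef
  have hg_meas : Measurable g := by
    rw [hgdef]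
    exact Measurable.ite measurableSet_Iio measurable_const
      (Measurable.ite measurableSet_Iio measurable_const measurable_const)
  have hg_int : ∀ c e : ℝ, IntervalIntegrable g volume c e := by
    intro c e
    set B : ℝ := max ‖v‖ (max ‖w'‖ ‖(-v : Fin d → ℝ)‖) with hBdef
    refine (intervalIntegrable_const (c := B)).mono_fun
      hg_meas.aestronglyMeasurable ?_
    refine Filter.Eventually.of_forall fun s => ?_
    have hB : ‖g s‖ ≤ B := by
      rw [hgdef]
      dsimp only
      split_ifs
      · exact le_max_left _ _
      · exact le_trans (le_max_left _ _) (le_max_right _ _)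
      · exact le_trans (le_max_right _ _) (le_max_right _ _)
    exact le_trans hB (le_abs_self B)
  have hne : ∀ b : ℝ, ∀ᵐ u : ℝ ∂volume, u ≠ b := by
    intro b
    have h := compl_mem_ae_iff.mpr (measure_singleton (μ := (volume : Measure ℝ)) b)
    exact h
  have P1 : ∀ s : ℝ, 0 ≤ s → s ≤ a → (∫ u in (0:ℝ)..s, g u) = s • v := by
    intro s h0 h1
    have hcongr : ∀ᵐ u : ℝ ∂volume, u ∈ Set.uIoc 0 s → g u = v := by
      filter_upwards [hne a] with u hu hmem
      rw [Set.uIoc_of_le h0] at hmem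
      have hua : u < a := lt_of_le_of_ne (le_trans hmem.2 h1) hu
      rw [hgdef]
      dsimp only
      rw [if_pos hua]
    rw [intervalIntegral.integral_congr_ae hcongr, intervalIntegral.integral_const,
      sub_zero]
  have P2 : ∀ s : ℝ, a ≤ s → s ≤ a + δ →
      (∫ u in (0:ℝ)..s, g u) = a • v + (s - a) • w' := by
    intro s h0 h1
    rw [← intervalIntegral.integral_add_adjacent_intervals (hg_int 0 a) (hg_int a s),
      P1 a ha0.le le_rfl]
    congr 1
    have hcongr : ∀ᵐ u : ℝ ∂volume, u ∈ Set.uIoc a s → g u = w' := by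
      filter_upwards [hne (a + δ)] with u hu hmem
      rw [Set.uIoc_of_le h0] at hmem
      have h2 : ¬ u < a := not_lt.mpr hmem.1.le
      have h3 : u < a + δ := lt_of_le_of_ne (le_trans hmem.2 h1) hu
      rw [hgdef]
      dsimp only
      rw [if_neg h2, if_pos h3]
    rw [intervalIntegral.integral_congr_ae hcongr, intervalIntegral.integral_const]
  have P3 : ∀ s : ℝ, a + δ ≤ s → s ≤ t →
      (∫ u in (0:ℝ)..s, g u) = a • v + δ • w' + (s - (a + δ)) • (-v) := by
    intro s h0 h1
    rw [← intervalIntegral.integral_add_adjacent_intervals (hg_int 0 (a + δ))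
      (hg_int (a + δ) s), P2 (a + δ) (by linarith) le_rfl, add_sub_cancel_left]
    congr 1
    have hcongr : Set.EqOn g (fun _ => -v) (Set.uIcc (a + δ) s) := by
      intro u hu
      rw [Set.uIcc_of_le h0] at hu
      have h2 : ¬ u < a := not_lt.mpr (by linarith [hu.1])
      have h3 : ¬ u < a + δ := not_lt.mpr hu.1
      rw [hgdef]
      dsimp only
      rw [if_neg h2, if_neg h3]
    rw [intervalIntegral.integral_congr hcongr, intervalIntegral.integral_const]
  -- pointwise descriptions of the path
  have Z1 : ∀ s : ℝ, 0 ≤ s → s ≤ a →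
      (fun i' => x i' + (∫ u in (0:ℝ)..s, g u) i') = (fun i => x i + s * v i) := by
    intro s h0 h1
    funext i
    rw [P1 s h0 h1]
    simp [smul_eq_mul]
  have Z2 : ∀ s : ℝ, a ≤ s → s ≤ a + δ →
      (fun i' => x i' + (∫ u in (0:ℝ)..s, g u) i')
        = (fun i => x i + a * v i + ((s - a) / δ) * (y i - x i)) := by
    intro s h0 h1
    funext i
    rw [P2 s h0 h1]
    simp only [Pi.add_apply, Pi.smul_apply, smul_eq_mul, hwdef]
    ring
  have Z3 : ∀ s : ℝ, a + δ ≤ s → s ≤ t →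
      (fun i' => x i' + (∫ u in (0:ℝ)..s, g u) i')
        = (fun i => y i + (t - s) * v i) := by
    intro s h0 h1
    funext i
    rw [P3 s h0 h1]
    simp only [Pi.add_apply, Pi.smul_apply, Pi.neg_apply, smul_eq_mul, hwdef]
    have hd : δ * ((y i - x i) / δ) = y i - x i := by field_simp
    rw [htsplit]
    field_simp
    ring
  -- membership of the path in D
  have hmemIcc : ∀ s ∈ Set.Icc (0:ℝ) t,
      (fun i' => x i' + (∫ u in (0:ℝ)..s, g u) i') ∈ D := by
    intro s hs
    rcases le_or_gt s a with h1 | h1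
    · rw [Z1 s hs.1 h1]
      exact (hstep x hx hxball s hs.1 (le_trans h1 haε)).1
    rcases le_or_gt s (a + δ) with h2 | h2
    · rw [Z2 s h1.le h2]
      have hu0 : 0 ≤ (s - a) / δ := div_nonneg (by linarith) hδpos.le
      have hu1 : (s - a) / δ ≤ 1 := by
        rw [div_le_one hδpos]
        linarith
      exact (hmid _ hu0 hu1).1
    · rw [Z3 s h2.le hs.2]
      have h3 : 0 ≤ t - s := by linarith [hs.2]
      have h4 : t - s ≤ a := by
        rw [htsplit] at hs ⊢
        linarith
      exact (hstep y hy hyball (t - s) h3 (le_trans h4 haε)).1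
  -- endpoint
  have hend : (fun i' => x i' + (∫ u in (0:ℝ)..t, g u) i') = y := by
    rw [Z3 t (by linarith) le_rfl]
    funext i
    simp
  -- coordinate lower bound on the path
  have hc₀β : c₀ ≤ β := by
    rw [hc₀def]
    exact div_le_self hβ0.le hκ1
  have hlow : ∀ s : ℝ, 0 < s → s < t → ∀ i,
      c₀ * min s (t - s) ≤ x i + (∫ u in (0:ℝ)..s, g u) i := by
    intro s hs0 hst i
    have hmin0 : 0 ≤ min s (t - s) := le_min hs0.le (by linarith)
    rcases le_or_gt s a with h1 | h1
    · have hb := (hstep x hx hxball s hs0.le (le_trans h1 haε)).2 i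
      have hz := congrFun (Z1 s hs0.le h1) i
      rw [hz]
      calc c₀ * min s (t - s) ≤ β * s :=
            mul_le_mul hc₀β (min_le_left _ _) hmin0 hβ0.le
        _ ≤ x i + s * v i := hb
    rcases le_or_gt s (a + δ) with h2 | h2
    · have hu0 : 0 ≤ (s - a) / δ := div_nonneg (by linarith) hδpos.le
      have hu1 : (s - a) / δ ≤ 1 := by
        rw [div_le_one hδpos]
        linarith
      have hb := (hmid _ hu0 hu1).2 i
      have hz := congrFun (Z2 s h1.le h2) i
      rw [hz]
      have hmin2 : 2 * min s (t - s) ≤ t := by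
        rcases le_total s (t - s) with h | h
        · rw [min_eq_left h]; linarith
        · rw [min_eq_right h]; linarith
      have hc₀min : c₀ * min s (t - s) ≤ δ := by
        have h3 : c₀ * min s (t - s) ≤ c₀ * (t / 2) :=
          mul_le_mul_of_nonneg_left (by linarith) hc₀.le
        have h4 : c₀ * (t / 2) = β * δ / 2 := by
          rw [hc₀def, htdef]
          field_simp
        nlinarith
      linarith
    · have h3 : 0 ≤ t - s := by linarith
      have h4 : t - s ≤ a := by
        rw [htsplit] at hst ⊢
        linarith
      have hb := (hstep y hy hyball (t - s) h3 (le_trans h4 haε)).2 i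
      have hz := congrFun (Z3 s h2.le hst.le) i
      rw [hz]
      calc c₀ * min s (t - s) ≤ β * (t - s) :=
            mul_le_mul hc₀β (min_le_right _ _) hmin0 hβ0.le
        _ ≤ y i + (t - s) * v i := hb
  -- the cost integrand
  set W : Set ℝ := Set.Ioo 0 a ∪ Set.Ioo a (a + δ) ∪ Set.Ioo (a + δ) t with hWdef
  set F : ℝ → ℝ := fun s =>
    N.Lagr (fun r => N.lam r (fun i' => x i' + (∫ u in (0:ℝ)..s, g u) i')) (g s) with hFdef
  have hF0 : ∀ s, 0 ≤ F s := by
    intro s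
    rw [hFdef]
    exact N.Lagr_nonneg _ _
  have hgv1 : ∀ s ∈ Set.Ioo (0:ℝ) a, g s = v := by
    intro s hs
    rw [hgdef]
    dsimp only
    rw [if_pos hs.2]
  have hgv2 : ∀ s ∈ Set.Ioo a (a + δ), g s = w' := by
    intro s hs
    rw [hgdef]
    dsimp only
    rw [if_neg (not_lt.mpr hs.1.le), if_pos hs.2]
  have hgv3 : ∀ s ∈ Set.Ioo (a + δ) t, g s = -v := by
    intro s hs
    rw [hgdef]
    dsimp only
    rw [if_neg (not_lt.mpr (by linarith [hs.1])), if_neg (not_lt.mpr hs.1.le)]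
  have hF1 : ∀ s ∈ Set.Ioo (0:ℝ) a,
      F s = N.Lagr (fun r => N.lam r (fun i => x i + s * v i)) v := by
    intro s hs
    rw [hFdef]
    dsimp only
    rw [Z1 s hs.1.le hs.2.le, hgv1 s hs]
  have hF2 : ∀ s ∈ Set.Ioo a (a + δ),
      F s = N.Lagr (fun r => N.lam r
        (fun i => x i + a * v i + ((s - a) / δ) * (y i - x i))) w' := by
    intro s hs
    rw [hFdef]
    dsimp only
    rw [Z2 s hs.1.le hs.2.le, hgv2 s hs]
  have hF3 : ∀ s ∈ Set.Ioo (a + δ) t,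
      F s = N.Lagr (fun r => N.lam r (fun i => y i + (t - s) * v i)) (-v) := by
    intro s hs
    rw [hFdef]
    dsimp only
    rw [Z3 s hs.1.le hs.2.le, hgv3 s hs]
  have hpos1 : ∀ s ∈ Set.Ioo (0:ℝ) a, ∀ i, 0 < x i + s * v i := by
    intro s hs i
    have hb := (hstep x hx hxball s hs.1.le (le_trans hs.2.le haε)).2 i
    nlinarith [hs.1]
  have hpos2 : ∀ s ∈ Set.Ioo a (a + δ), ∀ i,
      0 < x i + a * v i + ((s - a) / δ) * (y i - x i) := by
    intro s hs i
    have hu0 : 0 ≤ (s - a) / δ := div_nonneg (by linarith [hs.1]) hδpos.le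
    have hu1 : (s - a) / δ ≤ 1 := by
      rw [div_le_one hδpos]
      linarith [hs.2]
    have hb := (hmid _ hu0 hu1).2 i
    linarith
  have hpos3 : ∀ s ∈ Set.Ioo (a + δ) t, ∀ i, 0 < y i + (t - s) * v i := by
    intro s hs i
    have h3 : 0 ≤ t - s := by linarith [hs.2]
    have h4 : t - s ≤ a := by
      rw [htsplit] at hs ⊢
      have := hs.1
      linarith
    have hb := (hstep y hy hyball (t - s) h3 (le_trans h4 haε)).2 i
    nlinarith [hs.2]
  have hcont1 : Continuous (fun s : ℝ => fun i => x i + s * v i) :=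
    continuous_pi fun i => continuous_const.add (continuous_id'.mul continuous_const)
  have hcont2 : Continuous
      (fun s : ℝ => fun i => x i + a * v i + ((s - a) / δ) * (y i - x i)) :=
    continuous_pi fun i => continuous_const.add
      (((continuous_id'.sub continuous_const).div_const δ).mul continuous_const)
  have hcont3 : Continuous (fun s : ℝ => fun i => y i + (t - s) * v i) :=
    continuous_pi fun i => continuous_const.add
      ((continuous_const.sub continuous_id').mul continuous_const)
  have hlsc : LowerSemicontinuous (fun s => if s ∈ W then F s else 0) := by
    intro s₀ c hc
    dsimp only at hc
    by_cases hs₀ : s₀ ∈ W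
    · rw [if_pos hs₀] at hc
      rw [hWdef] at hs₀
      simp only [Set.mem_union] at hs₀
      rcases hs₀ with (h | h) | h
      · rw [hF1 s₀ h] at hc
        have hev := N.lsc_aux hcone _ hcont1 v _ isOpen_Ioo hpos1 s₀ h c hc
        filter_upwards [hev] with s hs
        have hsW : s ∈ W := by
          rw [hWdef]
          exact Or.inl (Or.inl hs.1)
        rw [if_pos hsW, hF1 s hs.1]
        exact hs.2
      · rw [hF2 s₀ h] at hc
        have hev := N.lsc_aux hcone _ hcont2 w' _ isOpen_Ioo hpos2 s₀ h c hc
        filter_upwards [hev] with s hs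
        have hsW : s ∈ W := by
          rw [hWdef]
          exact Or.inl (Or.inr hs.1)
        rw [if_pos hsW, hF2 s hs.1]
        exact hs.2
      · rw [hF3 s₀ h] at hc
        have hev := N.lsc_aux hcone _ hcont3 (-v) _ isOpen_Ioo hpos3 s₀ h c hc
        filter_upwards [hev] with s hs
        have hsW : s ∈ W := by
          rw [hWdef]
          exact Or.inr hs.1
        rw [if_pos hsW, hF3 s hs.1]
        exact hs.2
    · rw [if_neg hs₀] at hc
      refine Filter.Eventually.of_forall fun s => ?_
      dsimp only
      by_cases hsW : s ∈ W
      · rw [if_pos hsW]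
        exact lt_of_lt_of_le hc (hF0 s)
      · rw [if_neg hsW]
        exact hc
  have hmeasF' : Measurable (fun s => if s ∈ W then F s else 0) := hlsc.measurable
  have hWIoc : ∀ᵐ s ∂(volume.restrict (Set.Ioc (0:ℝ) t)), s ∈ W := by
    have h1 : ∀ᵐ s : ℝ ∂volume, s ∉ ({a, a + δ, t} : Set ℝ) := by
      exact compl_mem_ae_iff.mpr
        ((Set.toFinite ({a, a + δ, t} : Set ℝ)).measure_zero volume)
    filter_upwards [ae_restrict_mem measurableSet_Ioc, ae_restrict_of_ae h1] with s hs hnb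
    simp only [Set.mem_insert_iff, Set.mem_singleton_iff, not_or] at hnb
    obtain ⟨hna, hnaδ, hnt⟩ := hnb
    rw [hWdef]
    simp only [Set.mem_union, Set.mem_Ioo]
    rcases lt_or_ge s a with h | h
    · exact Or.inl (Or.inl ⟨hs.1, h⟩)
    rcases lt_or_ge s (a + δ) with h2 | h2
    · exact Or.inl (Or.inr ⟨lt_of_le_of_ne h (Ne.symm hna), h2⟩)
    · exact Or.inr ⟨lt_of_le_of_ne h2 (Ne.symm hnaδ), lt_of_le_of_ne hs.2 hnt⟩
  have haesm : AEStronglyMeasurable F (volume.restrict (Set.uIoc (0:ℝ) t)) := by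
    rw [Set.uIoc_of_le h0t]
    refine (hmeasF'.aestronglyMeasurable).congr ?_
    filter_upwards [hWIoc] with s hs
    rw [if_pos hs]
  set G : ℝ → ℝ := fun s => K₃ + (2 * K₂) * s ^ (-(1/2):ℝ)
      + (2 * K₂) * (t - s) ^ (-(1/2):ℝ) with hGdef
  have hWsub : W ⊆ Set.Ioo 0 t := by
    rw [hWdef]
    intro s hs
    simp only [Set.mem_union, Set.mem_Ioo] at hs ⊢
    rcases hs with (h | h) | h
    · exact ⟨h.1, by linarith [h.2]⟩
    · exact ⟨by linarith [h.1], by linarith [h.2]⟩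
    · exact ⟨by linarith [h.1], h.2⟩
  have hFbound : ∀ s ∈ W, F s ≤ G s := by
    intro s hsW
    obtain ⟨hs0, hst⟩ := hWsub hsW
    set φ : ℝ := c₀ * min s (t - s) with hφdef
    have hφ0 : 0 < φ := by
      rw [hφdef]
      exact mul_pos hc₀ (lt_min hs0 (by linarith))
    have hξnorm : (∑ i, |g s i|) ≤ 1 := by
      rw [hgdef]
      dsimp only
      split_ifs
      · exact hvv j
      · have hwi : ∀ i, |w' i| = |x i - y i| / δ := by
          intro i
          rw [hwdef]
          dsimp only
          rw [abs_div, abs_of_pos hδpos, abs_sub_comm]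
        calc (∑ i, |w' i|) = (∑ i, |x i - y i|) / δ := by
              rw [Finset.sum_div]
              exact Finset.sum_congr rfl fun i _ => hwi i
          _ ≤ 1 := by
              rw [← hδdef, div_self hδpos.ne']
      · simp only [Pi.neg_apply, abs_neg]
        exact hvv j
    obtain ⟨q, hq, hqrep⟩ := hqgen (g s) hξnorm
    have hzD : (fun i' => x i' + (∫ u in (0:ℝ)..s, g u) i') ∈ D :=
      hmemIcc s ⟨hs0.le, hst.le⟩
    have hz0 : ∀ i, 0 ≤ x i + (∫ u in (0:ℝ)..s, g u) i := fun i => hDpos _ hzD i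
    have hzX : ∀ i, x i + (∫ u in (0:ℝ)..s, g u) i ≤ X := fun i => hXc _ hzD i
    have hzφ : ∀ i, φ ≤ x i + (∫ u in (0:ℝ)..s, g u) i := by
      rw [hφdef]
      exact hlow s hs0 hst
    have hlampos : ∀ r, 0 < N.lam r (fun i' => x i' + (∫ u in (0:ℝ)..s, g u) i') :=
      fun r => N.lam_pos r (fun i => lt_of_lt_of_le hφ0 (hzφ i))
    have hmain := N.Lagr_le _ hlampos (g s) q (fun r => (hq r).1) hqrep
    have hterm : ∀ r : Fin m,
        N.lam r (fun i' => x i' + (∫ u in (0:ℝ)..s, g u) i')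
          + q r * max 0 (Real.log (q r)
            - Real.log (N.lam r (fun i' => x i' + (∫ u in (0:ℝ)..s, g u) i')))
        ≤ N.k r * X ^ (∑ i, N.cin r i)
          + Q * (max 0 (Real.log Q - Real.log (N.k r))
            + ((∑ i, N.cin r i : ℕ) : ℝ) * max 0 (-Real.log φ)) := by
      intro r
      have hup := N.lam_upper r hz0 hzX
      have hlo := N.lam_lower r hφ0.le hzφ
      have hkφ : 0 < N.k r * φ ^ (∑ i, N.cin r i) :=
        mul_pos (N.k_pos r) (pow_pos hφ0 _)
      have hQpart : q r * max 0 (Real.log (q r)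
            - Real.log (N.lam r (fun i' => x i' + (∫ u in (0:ℝ)..s, g u) i')))
          ≤ Q * max 0 (Real.log Q - Real.log (N.k r * φ ^ (∑ i, N.cin r i))) := by
        rcases eq_or_lt_of_le (hq r).1 with heq | hqpos
        · rw [← heq, zero_mul]
          exact mul_nonneg hQ0.le (le_max_left _ _)
        · refine mul_le_mul (hq r).2 ?_ (le_max_left _ _) hQ0.le
          refine max_le_max le_rfl (sub_le_sub ?_ ?_)
          · exact Real.log_le_log hqpos (hq r).2
          · exact Real.log_le_log hkφ hlo
      have hlogsplit : max 0 (Real.log Q - Real.log (N.k r * φ ^ (∑ i, N.cin r i)))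
          ≤ max 0 (Real.log Q - Real.log (N.k r))
            + ((∑ i, N.cin r i : ℕ) : ℝ) * max 0 (-Real.log φ) := by
        rw [Real.log_mul (N.k_pos r).ne' (pow_ne_zero _ hφ0.ne'), Real.log_pow]
        have he : Real.log Q - (Real.log (N.k r)
              + ((∑ i, N.cin r i : ℕ) : ℝ) * Real.log φ)
            = (Real.log Q - Real.log (N.k r))
              + ((∑ i, N.cin r i : ℕ) : ℝ) * (-Real.log φ) := by ring
        rw [he]
        refine le_trans (aux_max_add _ _) (add_le_add_right ?_ _)
        rw [mul_max_of_nonneg _ _ (Nat.cast_nonneg (∑ i, N.cin r i)), mul_zero]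
      calc N.lam r (fun i' => x i' + (∫ u in (0:ℝ)..s, g u) i')
            + q r * max 0 (Real.log (q r)
              - Real.log (N.lam r (fun i' => x i' + (∫ u in (0:ℝ)..s, g u) i')))
          ≤ N.k r * X ^ (∑ i, N.cin r i)
            + Q * max 0 (Real.log Q - Real.log (N.k r * φ ^ (∑ i, N.cin r i))) :=
            add_le_add hup hQpart
        _ ≤ _ := add_le_add_right (mul_le_mul_of_nonneg_left hlogsplit hQ0.le) _
    have hsum : ∑ r, (N.k r * X ^ (∑ i, N.cin r i)
          + Q * (max 0 (Real.log Q - Real.log (N.k r))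
            + ((∑ i, N.cin r i : ℕ) : ℝ) * max 0 (-Real.log φ)))
        = K₁ + K₂ * max 0 (-Real.log φ) := by
      rw [Finset.sum_add_distrib, ← Finset.mul_sum, Finset.sum_add_distrib, ← Finset.sum_mul,
        hK₁def, hK₂def]
      ring
    have hφle : max 0 (-Real.log φ) ≤ |Real.log c₀|
        + (2 * s ^ (-(1/2):ℝ) + 2 * (t - s) ^ (-(1/2):ℝ)) := by
      have hmin0 : 0 < min s (t - s) := lt_min hs0 (by linarith)
      have h1 : Real.log φ = Real.log c₀ + Real.log (min s (t - s)) := by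
        rw [hφdef, Real.log_mul hc₀.ne' hmin0.ne']
      have h2 : max 0 (-Real.log φ)
          ≤ max 0 (-Real.log c₀) + max 0 (-Real.log (min s (t - s))) := by
        rw [h1, neg_add]
        exact aux_max_add _ _
      have h3 : max 0 (-Real.log c₀) ≤ |Real.log c₀| :=
        max_le (abs_nonneg _) (neg_le_abs _)
      have h4 : max 0 (-Real.log (min s (t - s))) ≤ 2 * (min s (t - s)) ^ (-(1/2):ℝ) :=
        aux_log_rpow hmin0
      have h5 : (min s (t - s)) ^ (-(1/2):ℝ) ≤ s ^ (-(1/2):ℝ) + (t - s) ^ (-(1/2):ℝ) := by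
        rcases min_choice s (t - s) with h | h
        · rw [h]
          exact le_add_of_nonneg_right (Real.rpow_nonneg (by linarith) _)
        · rw [h]
          exact le_add_of_nonneg_left (Real.rpow_nonneg hs0.le _)
      linarith
    have hFs : F s ≤ K₁ + K₂ * max 0 (-Real.log φ) := by
      rw [hFdef]
      exact le_trans hmain (le_trans (Finset.sum_le_sum fun r _ => hterm r) (le_of_eq hsum))
    have h6 : K₂ * max 0 (-Real.log φ) ≤ K₂ * (|Real.log c₀|
        + (2 * s ^ (-(1/2):ℝ) + 2 * (t - s) ^ (-(1/2):ℝ))) :=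
      mul_le_mul_of_nonneg_left hφle hK₂0
    rw [hGdef]
    dsimp only
    rw [hK₃def]
    nlinarith [hFs, h6]
  have hGint : IntervalIntegrable G volume 0 t := by
    rw [hGdef]
    refine IntervalIntegrable.add (IntervalIntegrable.add intervalIntegrable_const
      ((hrpow_int 0 t).const_mul _)) ?_
    have h := ((hrpow_int 0 t).const_mul (2 * K₂)).comp_sub_left t
    simpa using h.symm
  have hFint : IntervalIntegrable F volume 0 t := by
    refine hGint.mono_fun' haesm ?_
    rw [Set.uIoc_of_le h0t]
    filter_upwards [hWIoc] with s hs
    rw [Real.norm_eq_abs, abs_of_nonneg (hF0 s)]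
    exact hFbound s hs
  have hmono : (∫ s in (0:ℝ)..t, F s) ≤ ∫ s in (0:ℝ)..t, G s := by
    refine intervalIntegral.integral_mono_ae_restrict h0t hFint hGint ?_
    have h1 : ∀ᵐ s : ℝ ∂volume, s ∉ ({0, a, a + δ, t} : Set ℝ) := by
      exact compl_mem_ae_iff.mpr
        ((Set.toFinite ({(0:ℝ), a, a + δ, t} : Set ℝ)).measure_zero volume)
    filter_upwards [ae_restrict_mem measurableSet_Icc, ae_restrict_of_ae h1] with s hs hnb
    simp only [Set.mem_insert_iff, Set.mem_singleton_iff, not_or] at hnb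
    obtain ⟨hn0, hna, hnaδ, hnt⟩ := hnb
    have hsW : s ∈ W := by
      rw [hWdef]
      simp only [Set.mem_union, Set.mem_Ioo]
      have hs1 : 0 < s := lt_of_le_of_ne hs.1 (Ne.symm hn0)
      rcases lt_or_ge s a with h | h
      · exact Or.inl (Or.inl ⟨hs1, h⟩)
      rcases lt_or_ge s (a + δ) with h2 | h2
      · exact Or.inl (Or.inr ⟨lt_of_le_of_ne h (Ne.symm hna), h2⟩)
      · exact Or.inr ⟨lt_of_le_of_ne h2 (Ne.symm hnaδ), lt_of_le_of_ne hs.2 hnt⟩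
    exact hFbound s hsW
  have hGval : (∫ s in (0:ℝ)..t, G s) = C t := by
    have e1 : (∫ s in (0:ℝ)..t, (t - s) ^ (-(1/2):ℝ))
        = ∫ s in (0:ℝ)..t, s ^ (-(1/2):ℝ) := by
      have h := intervalIntegral.integral_comp_sub_left (a := 0) (b := t)
        (fun u : ℝ => u ^ (-(1/2):ℝ)) t
      simpa using h
    rw [hGdef, hCdef]
    dsimp only
    rw [intervalIntegral.integral_add
        (intervalIntegrable_const.add ((hrpow_int 0 t).const_mul _))
        (by simpa using (((hrpow_int 0 t).const_mul (2 * K₂)).comp_sub_left t).symm),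
      intervalIntegral.integral_add intervalIntegrable_const ((hrpow_int 0 t).const_mul _),
      intervalIntegral.integral_const, intervalIntegral.integral_const_mul,
      intervalIntegral.integral_const_mul, e1]
    simp only [smul_eq_mul, sub_zero]
    ring
  exact ⟨g, hg_int 0 t, hmemIcc, hend, hFint, le_trans hmono (le_of_eq hGval)⟩
end
end
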